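/- arXiv:2502.18144 — 2 statements merged into one kernel-verified Lean document; each statement's English description precedes it below -/
import Mathlib

section
/- Let G be a connected simple graph on the vertex set [n] and let S = {ker x_1, …, ker x_n, ker(x_1 + ⋯ + x_n)} ⊆ A_G. Then S generates A_G, i.e. ⟨S⟩_{A_G} = A_G. -/
open Submodule

/-! ## Basic definitions for hyperplane arrangements -/

/-- The linear form `∑_{i ∈ I} x_i` on `K^n`. -/
noncomputable def sumForm (n : ℕ) (K : Type*) [Field K] (I : Finset (Fin n)) :
    (Fin n → K) →ₗ[K] K :=
  ∑ i ∈ I, LinearMap.proj i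

/-- The hyperplane `H_I = ker (∑_{i ∈ I} x_i)` in `K^n`. -/
noncomputable def hypI (n : ℕ) (K : Type*) [Field K] (I : Finset (Fin n)) :
    Submodule K (Fin n → K) :=
  LinearMap.ker (sumForm n K I)

/-- The nonempty vertex subsets of `G` inducing connected subgraphs. -/
def connSets {n : ℕ} (G : SimpleGraph (Fin n)) : Set (Finset (Fin n)) :=
  {I | I.Nonempty ∧ (G.induce (I : Set (Fin n))).Connected}

/-- The connected subgraph arrangement `A_G(K)` in `K^n`. -/
noncomputable def connArr (K : Type*) [Field K] {n : ℕ} (G : SimpleGraph (Fin n)) :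
    Set (Submodule K (Fin n → K)) :=
  (hypI n K) '' (connSets G)

/-- The intersection lattice of a central arrangement: all intersections of
subfamilies of `A` (with the empty intersection being the ambient space `⊤`). -/
def lat {K V : Type*} [Field K] [AddCommGroup V] [Module K V]
    (A : Set (Submodule K V)) : Set (Submodule K V) :=
  {X | ∃ B ⊆ A, X = sInf B}

/-- A central arrangement: a finite set of hyperplanes (coatoms of the submodule
lattice) in `V`. -/
def IsCentralArr {K V : Type*} [Field K] [AddCommGroup V] [Module K V]
    (A : Set (Submodule K V)) : Prop :=
  A.Finite ∧ ∀ H ∈ A, IsCoatom H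

/-- Two arrangements in `V` are linearly isomorphic. -/
def LinIsom {K V : Type*} [Field K] [AddCommGroup V] [Module K V]
    (A B : Set (Submodule K V)) : Prop :=
  ∃ φ : V ≃ₗ[K] V, B = (Submodule.map (φ : V →ₗ[K] V)) '' A

/-- Two arrangements are `L`-equivalent: their intersection lattices are
isomorphic posets. -/
def LEquiv {K V W : Type*} [Field K] [AddCommGroup V] [Module K V]
    [AddCommGroup W] [Module K W]
    (A : Set (Submodule K V)) (B : Set (Submodule K W)) : Prop :=
  Nonempty (↥(lat A) ≃o ↥(lat B))

/-- An arrangement `A` in `V` is projectively unique if every central arrangement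
in `V` that is `L`-equivalent to `A` is linearly isomorphic to `A`. -/
def ProjUnique {K V : Type*} [Field K] [AddCommGroup V] [Module K V]
    (A : Set (Submodule K V)) : Prop :=
  ∀ B : Set (Submodule K V), IsCentralArr B → LEquiv B A → LinIsom B A

/-- `Gen_i(A,S)`. -/
def Gen {K V : Type*} [Field K] [AddCommGroup V] [Module K V]
    (A S : Set (Submodule K V)) : ℕ → Set (Submodule K V)
  | 0 => S
  | (i+1) => {H | H ∈ A ∧ ∃ J ⊆ lat (Gen A S i), H = sSup J}

/-- The subarrangement `⟨S⟩_A` of `A` generated by `S`. -/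
def genSpan {K V : Type*} [Field K] [AddCommGroup V] [Module K V]
    (A S : Set (Submodule K V)) : Set (Submodule K V) :=
  ⋃ i, Gen A S i

/-- An arrangement is irreducible if it is not (linearly isomorphic to)
a nontrivial product of two lower-dimensional arrangements. -/
def IsIrredArr {K V : Type*} [Field K] [AddCommGroup V] [Module K V]
    (A : Set (Submodule K V)) : Prop :=
  ¬ ∃ U W : Submodule K V, IsCompl U W ∧ U ≠ ⊥ ∧ W ≠ ⊥ ∧ ∀ H ∈ A, U ≤ H ∨ W ≤ H

/-! ## Freeness -/

/-- The linear form `f` as a degree one polynomial. -/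
noncomputable def toPoly {n : ℕ} {K : Type*} [Field K] (f : (Fin n → K) →ₗ[K] K) :
    MvPolynomial (Fin n) K :=
  ∑ i, MvPolynomial.C (f (Pi.single i 1)) * MvPolynomial.X i

/-- The module `D(A)` of logarithmic derivations of an arrangement in `K^n`:
all `θ` with `θ(α_H) ∈ (α_H)` for every defining form `α_H` of every `H ∈ A`. -/
noncomputable def logDer (K : Type*) [Field K] {n : ℕ}
    (A : Set (Submodule K (Fin n → K))) :
    Submodule (MvPolynomial (Fin n) K)
      (Derivation K (MvPolynomial (Fin n) K) (MvPolynomial (Fin n) K)) where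
  carrier := {θ | ∀ H ∈ A, ∀ f : (Fin n → K) →ₗ[K] K, LinearMap.ker f = H →
      θ (toPoly f) ∈ Ideal.span {toPoly f}}
  add_mem' := by
    intro a b ha hb H hH f hf
    simpa using add_mem (ha H hH f hf) (hb H hH f hf)
  zero_mem' := by
    intro H hH f hf
    simp
  smul_mem' := by
    intro c θ hθ H hH f hf
    simpa [smul_eq_mul] using Ideal.mul_mem_left _ c (hθ H hH f hf)

/-- An arrangement in `K^n` is free if its module of logarithmic derivations is
free over the polynomial ring. -/
def IsFreeArr (K : Type*) [Field K] {n : ℕ}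
    (A : Set (Submodule K (Fin n → K))) : Prop :=
  Module.Free (MvPolynomial (Fin n) K) ↥(logDer K A)

/-- Freeness with a prescribed tuple of exponents: there is a basis of `D(A)`
consisting of homogeneous derivations of the given degrees. -/
def IsFreeExp (K : Type*) [Field K] {n : ℕ} (A : Set (Submodule K (Fin n → K)))
    (e : Fin n → ℕ) : Prop :=
  ∃ b : Module.Basis (Fin n) (MvPolynomial (Fin n) K) ↥(logDer K A),
    ∀ i j, ((b i : Derivation K (MvPolynomial (Fin n) K) (MvPolynomial (Fin n) K))
      (MvPolynomial.X j)).IsHomogeneous (e i)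

/-- The restriction `A^X` of an arrangement to a flat `X`, as an arrangement in `X`. -/
def restrictArr {K V : Type*} [Field K] [AddCommGroup V] [Module K V]
    (A : Set (Submodule K V)) (X : Submodule K V) : Set (Submodule K ↥X) :=
  {Y | ∃ H ∈ A, ¬ X ≤ H ∧ Y = Submodule.comap X.subtype H}

/-- Freeness with prescribed exponents for an arrangement in an abstract space:
transport along a linear isomorphism with `K^d`. -/
def IsFreeExpOn {K W : Type*} [Field K] [AddCommGroup W] [Module K W]
    (A : Set (Submodule K W)) (d : ℕ) (e : Fin d → ℕ) : Prop :=
  ∃ φ : W ≃ₗ[K] (Fin d → K),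
    IsFreeExp K ((Submodule.map (φ : W →ₗ[K] (Fin d → K))) '' A) e

/-- Accuracy: `A` is free with (sorted) exponents `e₁ ≤ … ≤ e_n` and for each
`1 ≤ d ≤ n` some flat `X ∈ L(A)` of dimension `d` has free restriction `A^X`
with exponents `(e₁, …, e_d)`. -/
def IsAccurate (K : Type*) [Field K] {n : ℕ}
    (A : Set (Submodule K (Fin n → K))) : Prop :=
  ∃ e : Fin n → ℕ, Monotone e ∧ IsFreeExp K A e ∧
    ∀ d : ℕ, 1 ≤ d → ∀ (hdn : d ≤ n), ∃ X ∈ lat A, Module.finrank K ↥X = d ∧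
      IsFreeExpOn (restrictArr A X) d (fun i => e ⟨i.1, lt_of_lt_of_le i.2 hdn⟩)

/-! ## Graphs -/

/-- The path graph on vertices `0, 1, …, n-1` (consecutive vertices adjacent). -/
def pathGraph' (n : ℕ) : SimpleGraph (Fin n) :=
  SimpleGraph.fromRel (fun a b => a.1 + 1 = b.1)

/-- The almost-path graph `A_{n,k}` (vertices `1, …, n+1` of the paper are
`0, …, n` here): a path on `0, …, n-1` plus the vertex `n` joined to `k-1`. -/
def almostPathGraph (n k : ℕ) : SimpleGraph (Fin (n+1)) :=
  SimpleGraph.fromRel (fun a b => (a.1 + 1 = b.1 ∧ b.1 < n) ∨ (a.1 + 1 = k ∧ b.1 = n))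

/-- The path-with-triangle graph `Δ_{n,k}` (vertices `1, …, n+1` of the paper are
`0, …, n` here): a path on `0, …, n-1` plus the vertex `n` joined to `k-1` and `k`. -/
def pathTriangleGraph (n k : ℕ) : SimpleGraph (Fin (n+1)) :=
  SimpleGraph.fromRel (fun a b =>
    (a.1 + 1 = b.1 ∧ b.1 < n) ∨ ((a.1 + 1 = k ∨ a.1 = k) ∧ b.1 = n))

/-! ## Factored and inductively factored arrangements -/

/-- The localization `A_X`. -/
def locArr {K V : Type*} [Field K] [AddCommGroup V] [Module K V]
    (A : Set (Submodule K V)) (X : Submodule K V) : Set (Submodule K V) :=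
  {H | H ∈ A ∧ X ≤ H}

/-- `P` is a partition of the set `A` (into nonempty blocks). -/
def IsPartitionOf {α : Type*} (A : Set α) (P : Set (Set α)) : Prop :=
  (∀ B ∈ P, B.Nonempty) ∧ (∀ B ∈ P, B ⊆ A) ∧ ∀ a ∈ A, ∃! B, B ∈ P ∧ a ∈ B

/-- A partition of an arrangement is independent if any transversal choice of
hyperplanes, one from each block, is linearly independent (the codimension of the
intersection equals the number of blocks). -/
def IsIndepPartition {K V : Type*} [Field K] [AddCommGroup V] [Module K V]
    (P : Set (Set (Submodule K V))) : Prop :=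
  ∀ f : Set (Submodule K V) → Submodule K V, (∀ B ∈ P, f B ∈ B) →
    Module.finrank K V = P.ncard + Module.finrank K ↥(⨅ B ∈ P, f B)

/-- A nice partition (factorization) of an arrangement. -/
def IsNicePartition {K V : Type*} [Field K] [AddCommGroup V] [Module K V]
    (A : Set (Submodule K V)) (P : Set (Set (Submodule K V))) : Prop :=
  IsPartitionOf A P ∧ IsIndepPartition P ∧
    ∀ X ∈ lat A, X ≠ (⊤ : Submodule K V) →
      ∃ B ∈ P, ∃ H, B ∩ locArr A X = {H}

/-- An arrangement is factored (nice) if it admits a nice partition. -/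
def IsFactored {K V : Type*} [Field K] [AddCommGroup V] [Module K V]
    (A : Set (Submodule K V)) : Prop :=
  ∃ P, IsNicePartition A P

/-- Inductively factored arrangements (in coordinate spaces `K^d`, restrictions
being transported to a coordinate space by a linear isomorphism). -/
inductive IndFactored (K : Type) [Field K] :
    (d : ℕ) → Set (Submodule K (Fin d → K)) → Set (Set (Submodule K (Fin d → K))) → Prop
  | empty (d : ℕ) : IndFactored K d ∅ ∅
  | step (d : ℕ) (A : Set (Submodule K (Fin d → K)))
      (P : Set (Set (Submodule K (Fin d → K))))
      (B₁ : Set (Submodule K (Fin d → K))) (H₀ : Submodule K (Fin d → K))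
      (e : ℕ) (φ : ↥H₀ ≃ₗ[K] (Fin e → K))
      (hB₁ : B₁ ∈ P) (hH₀B : H₀ ∈ B₁) (hH₀A : H₀ ∈ A)
      (hbij : Set.BijOn (fun H => Submodule.comap H₀.subtype H) (A \ B₁)
        ((fun H => Submodule.comap H₀.subtype H) '' (A \ {H₀})))
      (hdel : IndFactored K d (A \ {H₀})
        {C | ∃ B ∈ P, C = B ∩ (A \ {H₀}) ∧ C.Nonempty})
      (hres : IndFactored K e
        ((fun Y => Submodule.map (φ : ↥H₀ →ₗ[K] (Fin e → K)) Y) ''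
          ((fun H => Submodule.comap H₀.subtype H) '' (A \ {H₀})))
        {C | ∃ B ∈ P, B ≠ B₁ ∧
          C = (fun Y => Submodule.map (φ : ↥H₀ →ₗ[K] (Fin e → K)) Y) ''
            ((fun H => Submodule.comap H₀.subtype H) '' B)}) :
      IndFactored K d A P

/-- Inductively free arrangements with their multisets of exponents. -/
inductive IndFree (K : Type) [Field K] :
    (d : ℕ) → Set (Submodule K (Fin d → K)) → Multiset ℕ → Prop
  | empty (d : ℕ) : IndFree K d ∅ (Multiset.replicate d 0)
  | step (d : ℕ) (A : Set (Submodule K (Fin d → K))) (H₀ : Submodule K (Fin d → K))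
      (m : ℕ) (φ : ↥H₀ ≃ₗ[K] (Fin m → K)) (E : Multiset ℕ) (e : ℕ)
      (hH₀ : H₀ ∈ A)
      (hdel : IndFree K d (A \ {H₀}) (e ::ₘ E))
      (hres : IndFree K m
        ((fun Y => Submodule.map (φ : ↥H₀ →ₗ[K] (Fin m → K)) Y) ''
          ((fun H => Submodule.comap H₀.subtype H) '' (A \ {H₀}))) E) :
      IndFree K d A ((e+1) ::ₘ E)

/-! ## Asphericity -/

/-- The complement of (the union of) a complex arrangement in `ℂ^n`. -/
def arrComp {n : ℕ} (A : Set (Submodule ℂ (Fin n → ℂ))) : Set (Fin n → ℂ) :=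
  {v | ∀ H ∈ A, v ∉ H}

/-- A space is aspherical if all its homotopy groups `π_m`, `m ≥ 2`, vanish. -/
def IsAspherical (X : Type*) [TopologicalSpace X] : Prop :=
  ∀ (x : X) (m : ℕ), 2 ≤ m → Subsingleton (HomotopyGroup (Fin m) X x)

/-- A complex arrangement is `K(π,1)` if its complement is aspherical. -/
def IsKPi1 {n : ℕ} (A : Set (Submodule ℂ (Fin n → ℂ))) : Prop :=
  IsAspherical ↥(arrComp A)

/-! ## Formality -/

/-- Formality: all linear dependencies among (any choice of) defining forms of the
hyperplanes are generated by the dependencies supported on rank-two flats. -/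
def IsFormal {K V : Type*} [Field K] [AddCommGroup V] [Module K V]
    (A : Set (Submodule K V)) : Prop :=
  ∀ α : Submodule K V → (V →ₗ[K] K),
    (∀ H ∈ A, LinearMap.ker (α H) = H) →
    ∀ c : Submodule K V →₀ K, ↑c.support ⊆ A →
      (∑ H ∈ c.support, c H • α H) = 0 →
      c ∈ Submodule.span K
        {r : Submodule K V →₀ K | ↑r.support ⊆ A ∧
          (∑ H ∈ r.support, r H • α H) = 0 ∧
          ∃ X ∈ lat A, Module.finrank K (V ⧸ X) = 2 ∧ ∀ H ∈ r.support, X ≤ H}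

/-- Combinatorial formality. -/
def IsCombFormal {K V : Type*} [Field K] [AddCommGroup V] [Module K V]
    (A : Set (Submodule K V)) : Prop :=
  IsFormal A ∧ ∀ (K' : Type) [Field K'] (m : ℕ) (B : Set (Submodule K' (Fin m → K'))),
    IsCentralArr B → Nonempty (↥(lat B) ≃o ↥(lat A)) → IsFormal B

/-! ## Line closure -/

/-- `C` is a line-closed subset of the arrangement `A`. -/
def IsLineClosed {K V : Type*} [Field K] [AddCommGroup V] [Module K V]
    (A C : Set (Submodule K V)) : Prop :=
  ∀ H ∈ C, ∀ H' ∈ C, {H'' | H'' ∈ A ∧ H ⊓ H' ≤ H''} ⊆ C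

/-- The line closure of `B` in `A`. -/
def lineClosure {K V : Type*} [Field K] [AddCommGroup V] [Module K V]
    (A B : Set (Submodule K V)) : Set (Submodule K V) :=
  ⋂₀ {C | B ⊆ C ∧ C ⊆ A ∧ IsLineClosed A C}

/-! ## MAT-freeness -/

/-- MAT-freeness of an arrangement in `K^n`. -/
def IsMATFree (K : Type*) [Field K] {n : ℕ}
    (A : Set (Submodule K (Fin n → K))) : Prop :=
  ∃ (m : ℕ) (π : Fin m → Set (Submodule K (Fin n → K))),
    (⋃ i, π i) = A ∧
    (∀ i, (π i).Nonempty) ∧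
    (∀ i j, i ≠ j → Disjoint (π i) (π j)) ∧
    ∀ j : Fin m,
      (n = (π j).ncard + Module.finrank K ↥(sInf (π j) : Submodule K (Fin n → K))) ∧
      (¬ (SetLike.coe (sInf (π j) : Submodule K (Fin n → K)) ⊆
          ⋃ H ∈ {H | ∃ i : Fin m, i < j ∧ H ∈ π i}, SetLike.coe H)) ∧
      ∀ H ∈ π j,
        {H' | ∃ i : Fin m, i < j ∧ H' ∈ π i}.ncard =
          ((fun H' => H' ⊓ H) '' {H' | ∃ i : Fin m, i < j ∧ H' ∈ π i}).ncard + j.1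

/-! ## Subarrangements by size, supersolvability -/

/-- The ideal subarrangement `A_G^s` of hyperplanes `H_I` with `|I| ≤ s`. -/
noncomputable def AGs (K : Type*) [Field K] {n : ℕ} (G : SimpleGraph (Fin n)) (s : ℕ) :
    Set (Submodule K (Fin n → K)) :=
  hypI n K '' {I | I ∈ connSets G ∧ I.card ≤ s}

/-- The closure of a subspace in the intersection lattice of `A`. -/
noncomputable def flatClosure {K V : Type*} [Field K] [AddCommGroup V] [Module K V]
    (A : Set (Submodule K V)) (Z : Submodule K V) : Submodule K V :=
  sInf {H | H ∈ A ∧ Z ≤ H}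

/-- The rank (codimension) of a subspace of `K^n`. -/
noncomputable def arrRank (K : Type*) [Field K] {n : ℕ}
    (X : Submodule K (Fin n → K)) : ℕ :=
  n - Module.finrank K ↥X

/-- A modular flat of an arrangement. -/
noncomputable def IsModularFlat (K : Type*) [Field K] {n : ℕ}
    (A : Set (Submodule K (Fin n → K))) (X : Submodule K (Fin n → K)) : Prop :=
  X ∈ lat A ∧ ∀ Y ∈ lat A,
    arrRank K X + arrRank K Y =
      arrRank K (X ⊓ Y) + arrRank K (flatClosure A (X ⊔ Y))

/-- Supersolvability: a maximal chain of modular flats in `L(A)`. -/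
noncomputable def IsSupersolvable (K : Type*) [Field K] {n : ℕ}
    (A : Set (Submodule K (Fin n → K))) : Prop :=
  ∃ c : ℕ → Submodule K (Fin n → K),
    c 0 = ⊤ ∧ c (arrRank K (sInf A)) = sInf A ∧
    (∀ i ≤ arrRank K (sInf A), IsModularFlat K A (c i) ∧ arrRank K (c i) = i) ∧
    ∀ i < arrRank K (sInf A), c (i + 1) ≤ c i

lemma mem_hypI' {n : ℕ} {K : Type*} [Field K] {I : Finset (Fin n)} {v : Fin n → K} :
    v ∈ hypI n K I ↔ ∑ i ∈ I, v i = 0 := by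
  simp [hypI, sumForm, LinearMap.mem_ker, LinearMap.sum_apply]

lemma induce_singleton_connected {n : ℕ} (G : SimpleGraph (Fin n)) (i : Fin n) :
    (G.induce ((({i} : Finset (Fin n))) : Set (Fin n))).Connected := by
  have hne : Nonempty (({i} : Finset (Fin n)) : Set (Fin n)) := ⟨⟨i, by simp⟩⟩
  refine SimpleGraph.Connected.mk ?_
  intro a b
  have : a = b := Subtype.ext (by
    have ha := a.2; have hb := b.2
    simp only [Finset.coe_singleton, Set.mem_singleton_iff] at ha hb
    rw [ha, hb])
  exact this ▸ SimpleGraph.Reachable.refl _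

/-- For a connected simple graph `G` on `[n]`, the set
`S = {ker x_1, …, ker x_n, ker (x_1 + ⋯ + x_n)}` generates `A_G`. -/
theorem connArr_genSpan (n : ℕ) (G : SimpleGraph (Fin n)) (hG : G.Connected) :
    genSpan (connArr ℚ G)
      ((Set.range fun i : Fin n => hypI n ℚ {i}) ∪ {hypI n ℚ Finset.univ}) =
      connArr ℚ G := by
  haveI := hG.nonempty
  apply Set.Subset.antisymm
  · apply Set.iUnion_subset
    intro i
    match i with
    | 0 =>
      rintro H (⟨j, rfl⟩ | rfl)
      · exact ⟨{j}, ⟨Finset.singleton_nonempty j, induce_singleton_connected G j⟩, rfl⟩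
      · refine ⟨Finset.univ, ⟨Finset.univ_nonempty, ?_⟩, rfl⟩
        rw [Finset.coe_univ]
        exact (SimpleGraph.induceUnivIso G).connected_iff.mpr hG
    | (i+1) => exact fun H hH => hH.1
  · rintro H ⟨I, ⟨hIne, hIconn⟩, rfl⟩
    refine Set.mem_iUnion.2 ⟨1, ⟨⟨I, ⟨hIne, hIconn⟩, rfl⟩, ?_⟩⟩
    set X := sInf (((fun j => hypI n ℚ {j}) '' {j | j ∉ I}) ∪ {hypI n ℚ Finset.univ}) with hX
    set Y := sInf ((fun j => hypI n ℚ {j}) '' {j | j ∈ I}) with hY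
    refine ⟨{X, Y}, ?_, ?_⟩
    · rintro Z (rfl | rfl)
      · exact ⟨_, by rintro W (⟨j, _, rfl⟩ | rfl); exacts [Or.inl ⟨j, rfl⟩, Or.inr rfl], hX⟩
      · exact ⟨_, by rintro W ⟨j, _, rfl⟩; exact Or.inl ⟨j, rfl⟩, hY⟩
    · rw [sSup_pair]
      have hXle : X ≤ hypI n ℚ I := by
        intro v hv
        rw [hX, Submodule.mem_sInf] at hv
        have hvu : ∑ j, v j = 0 := mem_hypI'.1 (hv _ (Or.inr rfl))
        have hvz : ∀ j ∉ I, v j = 0 := fun j hj => by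
          simpa using mem_hypI'.1 (hv _ (Or.inl ⟨j, hj, rfl⟩))
        rw [mem_hypI']
        exact (Finset.sum_subset (Finset.subset_univ I) (fun x _ hx => hvz x hx)).trans hvu
      have hYle : Y ≤ hypI n ℚ I := by
        intro v hv
        rw [hY, Submodule.mem_sInf] at hv
        rw [mem_hypI']
        refine Finset.sum_eq_zero fun j hj => ?_
        simpa using mem_hypI'.1 (hv _ ⟨j, hj, rfl⟩)
      refine le_antisymm ?_ (sup_le hXle hYle)
      intro v hv
      rw [mem_hypI'] at hv
      have hdecomp : v = (fun j => if j ∈ I then v j else 0)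
          + (fun j => if j ∈ I then 0 else v j) := by
        funext j; by_cases h : j ∈ I <;> simp [h]
      rw [hdecomp]
      refine Submodule.add_mem_sup ?_ ?_
      · rw [hX, Submodule.mem_sInf]
        rintro W (⟨j, hj, rfl⟩ | rfl)
        · rw [mem_hypI']; simp [Set.mem_setOf_eq.mp hj]
        · rw [mem_hypI', Finset.sum_ite_mem]
          simpa using hv
      · rw [hY, Submodule.mem_sInf]
        rintro W ⟨j, hj, rfl⟩
        rw [mem_hypI']; simp [Set.mem_setOf_eq.mp hj]
end

section
/- Let A be an essential and irreducible central arrangement in V ≅ K^ℓ. If there is a subset S ⊆ A with ⟨S⟩_A = A and |S| = ℓ + 1, then A is projectively unique. -/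
open Submodule

/-! ### Auxiliary lemmas for the proof -/

open Submodule Module


variable {K : Type*} [Field K] {V : Type*} [AddCommGroup V] [Module K V]

section Basic
variable [FiniteDimensional K V]

/-- A coatom has corank one. -/
theorem coatom_finrank {H : Submodule K V} (hH : IsCoatom H) :
    finrank K H + 1 = finrank K V := by
  obtain ⟨hne, hmax⟩ := hH
  have hlt : H < ⊤ := lt_top_iff_ne_top.mpr hne
  obtain ⟨v, hv⟩ := SetLike.exists_of_lt hlt
  have hvH : v ∉ H := hv.2
  have htop : H ⊔ (K ∙ v) = ⊤ := by
    apply hmax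
    refine lt_of_le_of_ne le_sup_left ?_
    intro h
    have : v ∈ H ⊔ (K ∙ v) := Submodule.mem_sup_right (Submodule.mem_span_singleton_self v)
    exact hvH (h ▸ this)
  have h1 : finrank K V ≤ finrank K H + 1 := by
    have := Submodule.finrank_sup_add_finrank_inf_eq H (K ∙ v)
    have hv0 : v ≠ 0 := fun h => hvH (h ▸ H.zero_mem)
    rw [htop, finrank_top, finrank_span_singleton hv0] at this
    omega
  have h2 : finrank K H < finrank K V := by
    simpa using Submodule.finrank_lt_finrank_of_lt hlt
  omega

theorem eq_of_le_of_finrank_eq' {X Y : Submodule K V} (h : X ≤ Y)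
    (hr : finrank K Y ≤ finrank K X) : X = Y :=
  Submodule.eq_of_le_of_finrank_le h hr

/-- A nonzero linear form has a corank-one kernel. -/
theorem ker_form_finrank {f : V →ₗ[K] K} (hf : f ≠ 0) :
    finrank K (LinearMap.ker f) + 1 = finrank K V := by
  have hr : LinearMap.range f = ⊤ := by
    by_contra h
    obtain ⟨v, hv⟩ := DFunLike.ne_iff.mp hf
    have hv' : f v ≠ 0 := by simpa using hv
    apply h
    rw [eq_top_iff]
    intro x _
    have : x = (x * (f v)⁻¹) • f v := by
      simp [smul_eq_mul, mul_assoc, inv_mul_cancel₀ hv']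
    rw [this]
    exact Submodule.smul_mem _ _ (LinearMap.mem_range_self f v)
  have := LinearMap.finrank_range_add_finrank_ker f
  rw [hr, finrank_top, finrank_self] at this
  omega

/-- A coatom is the kernel of some linear form. -/
theorem exists_form_of_coatom {H : Submodule K V} (hH : IsCoatom H) :
    ∃ f : V →ₗ[K] K, LinearMap.ker f = H := by
  have hlt : H < ⊤ := lt_top_iff_ne_top.mpr hH.1
  obtain ⟨v, hv⟩ := SetLike.exists_of_lt hlt
  have hvH : v ∉ H := hv.2
  have hv0 : v ≠ 0 := fun h => hvH (h ▸ H.zero_mem)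
  have hcompl : IsCompl (K ∙ v) H := by
    constructor
    · rw [disjoint_iff]
      ext x
      simp only [Submodule.mem_inf, Submodule.mem_bot, Submodule.mem_span_singleton]
      constructor
      · rintro ⟨⟨c, rfl⟩, hc⟩
        rcases eq_or_ne c 0 with rfl | hc0
        · simp
        · exact absurd ((H.smul_mem_iff hc0).mp hc) hvH
      · rintro rfl; exact ⟨⟨0, by simp⟩, H.zero_mem⟩
    · rw [codisjoint_iff]
      apply hH.2
      refine lt_of_le_of_ne le_sup_right ?_
      intro h
      have : v ∈ (K ∙ v) ⊔ H := Submodule.mem_sup_left (Submodule.mem_span_singleton_self v)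
      exact hvH (h ▸ this)
  refine ⟨(LinearEquiv.toSpanNonzeroSingleton K V v hv0).symm.toLinearMap ∘ₗ
    Submodule.projectionOnto _ _ hcompl, ?_⟩
  rw [LinearMap.ker_comp, LinearMap.ker_eq_bot.mpr (LinearEquiv.injective _),
    Submodule.comap_bot, Submodule.linearProjOfIsCompl_ker]

end Basic

variable {K : Type*} [Field K] {V : Type*} [AddCommGroup V] [Module K V]

theorem mem_lat_self {A : Set (Submodule K V)} {H : Submodule K V} (h : H ∈ A) :
    H ∈ lat A := ⟨{H}, by simpa using h, by simp⟩

theorem top_mem_lat (A : Set (Submodule K V)) : ⊤ ∈ lat A :=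
  ⟨∅, Set.empty_subset _, by simp⟩

theorem Gen_subset {A S : Set (Submodule K V)} (hSA : S ⊆ A) :
    ∀ i, Gen A S i ⊆ A
  | 0 => hSA
  | (i+1) => fun _ h => h.1

theorem sInf_le_of_mem_Gen {A S : Set (Submodule K V)} (hbot : (⊥ : Submodule K V) ∉ A) :
    ∀ i, ∀ H ∈ Gen A S i, sInf S ≤ H := by
  intro i
  induction i with
  | zero => exact fun H hH => sInf_le hH
  | succ i ih =>
    rintro H ⟨hHA, J, hJ, rfl⟩
    rcases Set.eq_empty_or_nonempty J with rfl | ⟨X, hX⟩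
    · simp only [sSup_empty] at hHA ⊢
      exact absurd hHA hbot
    · obtain ⟨C, hC, rfl⟩ := hJ hX
      exact le_trans (le_sInf fun H' hH' => ih H' (hC hH')) (le_sSup hX)

theorem dec_inf {U W : Submodule K V} (hUW : Codisjoint U W) {C : Set (Submodule K V)}
    (hC : ∀ H ∈ C, U ≤ H ∨ W ≤ H) :
    sInf C ≤ (sInf C ⊓ U) ⊔ (sInf C ⊓ W) := by
  intro x hx
  have hxUW : x ∈ U ⊔ W := by rw [hUW.eq_top]; trivial
  obtain ⟨u, hu, w, hw, rfl⟩ := Submodule.mem_sup.mp hxUW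
  have huC : u ∈ sInf C := by
    rw [Submodule.mem_sInf]
    intro H hH
    rcases hC H hH with h | h
    · exact h hu
    · have huw : u + w ∈ H := Submodule.mem_sInf.mp hx H hH
      have : w ∈ H := h hw
      simpa using H.sub_mem huw this
  have hwC : w ∈ sInf C := by
    have : u + w - u ∈ sInf C := Submodule.sub_mem _ hx huC
    simpa using this
  exact Submodule.mem_sup.mpr ⟨u, ⟨huC, hu⟩, w, ⟨hwC, hw⟩, rfl⟩

section FD
variable [FiniteDimensional K V]

theorem dec_coatom {U W H : Submodule K V} (hUW : IsCompl U W) (hH : IsCoatom H)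
    (hdec : H ≤ (H ⊓ U) ⊔ (H ⊓ W)) : U ≤ H ∨ W ≤ H := by
  by_contra hcon
  push_neg at hcon
  obtain ⟨hU, hW⟩ := hcon
  have hsup : (H ⊓ U) ⊔ (H ⊓ W) = H :=
    le_antisymm (sup_le inf_le_left inf_le_left) hdec
  have hinfbot : (H ⊓ U) ⊓ (H ⊓ W) = ⊥ := by
    rw [← le_bot_iff, ← (disjoint_iff.mp hUW.disjoint)]
    exact le_inf (le_trans inf_le_left inf_le_right) (le_trans inf_le_right inf_le_right)
  have heq := Submodule.finrank_sup_add_finrank_inf_eq (H ⊓ U) (H ⊓ W)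
  rw [hsup, hinfbot, finrank_bot] at heq
  have hltU : H ⊓ U < U := lt_of_le_of_ne inf_le_right (fun h => hU (by rw [← h]; exact inf_le_left))
  have hltW : H ⊓ W < W := lt_of_le_of_ne inf_le_right (fun h => hW (by rw [← h]; exact inf_le_left))
  have h1 := Submodule.finrank_lt_finrank_of_lt hltU
  have h2 := Submodule.finrank_lt_finrank_of_lt hltW
  have h3 := Submodule.finrank_add_eq_of_isCompl hUW
  have h4 := coatom_finrank hH
  omega

theorem gen_dec {A S : Set (Submodule K V)} (hco : ∀ H ∈ A, IsCoatom H)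
    {U W : Submodule K V} (hUW : IsCompl U W) (hS : ∀ H ∈ S, U ≤ H ∨ W ≤ H) :
    ∀ i, ∀ H ∈ Gen A S i, U ≤ H ∨ W ≤ H := by
  intro i
  induction i with
  | zero => exact hS
  | succ i ih =>
    rintro H ⟨hHA, J, hJ, rfl⟩
    apply dec_coatom hUW (hco _ hHA)
    apply sSup_le
    intro X hX
    obtain ⟨C, hC, rfl⟩ := hJ hX
    refine le_trans (dec_inf hUW.codisjoint (fun H' h => ih H' (hC h))) ?_
    gcongr <;> exact le_sSup hX

end FD

section Lat
variable [FiniteDimensional K V]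

theorem finrank_strictMono_lat {L : Set (Submodule K V)} :
    StrictMono (fun X : ↥L => finrank K X.val) := fun X Y h =>
  Submodule.finrank_lt_finrank_of_lt (Subtype.coe_lt_coe.mpr h)

theorem chain_bound {L : Set (Submodule K V)} (p : LTSeries ↥L) :
    finrank K (p.head).val + p.length ≤ finrank K V := by
  have h1 := (p.map (fun X => finrank K X.val) finrank_strictMono_lat).head_add_length_le_nat
  simp only [LTSeries.head_map, LTSeries.last_map] at h1
  have h2 : finrank K ((p.last).val) ≤ finrank K V := Submodule.finrank_le _
  have h3 : (p.map (fun X => finrank K X.val) finrank_strictMono_lat).length = p.length := rfl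
  omega

theorem chain_exists {B : Set (Submodule K V)} (hco : ∀ H ∈ B, IsCoatom H)
    (C : Finset (Submodule K V)) (hC : ↑C ⊆ B) :
    ∃ p : LTSeries ↥(lat B), (p.head).val = sInf (C : Set (Submodule K V)) ∧
      finrank K ↥(sInf (C : Set (Submodule K V))) + p.length = finrank K V := by
  classical
  induction C using Finset.induction_on with
  | empty =>
    refine ⟨RelSeries.singleton _ ⟨⊤, top_mem_lat B⟩, ?_, ?_⟩
    · simp [RelSeries.head_singleton]
    · rw [Finset.coe_empty, sInf_empty, RelSeries.singleton_length]
      simp [finrank_top]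
  | @insert H C hHC ih =>
    have hC' : (C : Set (Submodule K V)) ⊆ B := by
      intro x hx; exact hC (by simp [hx])
    have hHB : H ∈ B := hC (by simp)
    obtain ⟨p, hph, hpl⟩ := ih hC'
    have hXeq : sInf ((insert H C : Finset (Submodule K V)) : Set (Submodule K V))
        = H ⊓ sInf (C : Set (Submodule K V)) := by
      rw [Finset.coe_insert, sInf_insert]
    set Y := sInf (C : Set (Submodule K V)) with hY
    set X := H ⊓ Y with hX
    have hXY : X ≤ Y := inf_le_right
    have hXmem : X ∈ lat B := ⟨↑(insert H C), by intro x hx; exact hC hx, hXeq.symm⟩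
    rcases eq_or_ne (finrank K ↥X) (finrank K ↥Y) with heq | hne
    · have hXY' : X = Y := Submodule.eq_of_le_of_finrank_le hXY heq.ge
      refine ⟨p, ?_, ?_⟩
      · rw [hXeq, hXY']
        exact hph
      · rw [hXeq, hXY']
        exact hpl
    · have hdim : finrank K X + 1 = finrank K Y := by
        have h1 := Submodule.finrank_sup_add_finrank_inf_eq H Y
        have h2 : finrank K ↥(H ⊔ Y) ≤ finrank K V := Submodule.finrank_le _
        have h3 := coatom_finrank (hco H hHB)
        have h4 : finrank K X ≤ finrank K Y := by
          exact Submodule.finrank_mono hXY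
        rw [← hX] at h1
        omega
      have hlt : (⟨X, hXmem⟩ : ↥(lat B)) < p.head := by
        rw [← Subtype.coe_lt_coe, hph]
        exact lt_of_le_of_ne hXY (fun h => hne (congrArg (fun Z : Submodule K V => finrank K ↥Z) h))
      refine ⟨p.cons ⟨X, hXmem⟩ hlt, by simp [RelSeries.head_cons, hXeq]; rfl, ?_⟩
      rw [hXeq, RelSeries.cons_length]
      omega

theorem latelt_repr {B : Set (Submodule K V)} (hBfin : B.Finite) (X : ↥(lat B)) :
    ∃ C : Finset (Submodule K V), ↑C ⊆ B ∧ X.val = sInf (C : Set (Submodule K V)) := by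
  obtain ⟨C', hC', hXeq⟩ := X.2
  have hfin : C'.Finite := hBfin.subset hC'
  exact ⟨hfin.toFinset, by simpa using hC', by rwa [Set.Finite.coe_toFinset]⟩

theorem finrank_orderIso_le {B A : Set (Submodule K V)} (hB : IsCentralArr B)
    (ψ : ↥(lat B) ≃o ↥(lat A)) (X : ↥(lat B)) :
    finrank K ((ψ X).val) ≤ finrank K X.val := by
  obtain ⟨C, hC, hXeq⟩ := latelt_repr hB.1 X
  obtain ⟨p, hph, hpl⟩ := chain_exists (fun H hH => hB.2 H hH) C hC
  have hphX : p.head = X := Subtype.ext (by rw [hph, hXeq])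
  have hb := chain_bound (p.map ψ ψ.strictMono)
  rw [LTSeries.head_map] at hb
  have hlen : (p.map ψ ψ.strictMono).length = p.length := rfl
  rw [← hph] at hpl
  rw [← hphX]
  omega

theorem finrank_orderIso {B A : Set (Submodule K V)} (hB : IsCentralArr B)
    (hA : IsCentralArr A) (ψ : ↥(lat B) ≃o ↥(lat A)) (X : ↥(lat B)) :
    finrank K ((ψ X).val) = finrank K X.val := by
  refine le_antisymm (finrank_orderIso_le hB ψ X) ?_
  have := finrank_orderIso_le hA ψ.symm (ψ X)
  rwa [ψ.symm_apply_apply] at this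

theorem mem_of_lat_finrank {B : Set (Submodule K V)} (hB : IsCentralArr B)
    {X : Submodule K V} (hX : X ∈ lat B)
    (hfr : finrank K X + 1 = finrank K V) : X ∈ B := by
  obtain ⟨C, hC, rfl⟩ := hX
  rcases Set.eq_empty_or_nonempty C with rfl | ⟨H₀, hH₀⟩
  · rw [sInf_empty] at hfr ⊢
    rw [finrank_top] at hfr
    omega
  · have hle : sInf C ≤ H₀ := sInf_le hH₀
    have h3 := coatom_finrank (hB.2 H₀ (hC hH₀))
    have : sInf C = H₀ := Submodule.eq_of_le_of_finrank_le hle (by omega)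
    rw [this]
    exact hC hH₀

theorem orderIso_mem_arr {B A : Set (Submodule K V)} (hB : IsCentralArr B)
    (hA : IsCentralArr A) (ψ : ↥(lat B) ≃o ↥(lat A)) {H : Submodule K V} (hH : H ∈ B) :
    (ψ ⟨H, mem_lat_self hH⟩).val ∈ A := by
  apply mem_of_lat_finrank hA (ψ _).2
  rw [finrank_orderIso hB hA ψ]
  exact coatom_finrank (hB.2 H hH)

end Lat

theorem biInf_mem_lat {A : Set (Submodule K V)} {ι : Type*} {h : ι → Submodule K V}
    (hh : ∀ j, h j ∈ A) (T : Set ι) : (⨅ j ∈ T, h j) ∈ lat A :=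
  ⟨h '' T, by rintro _ ⟨j, hj, rfl⟩; exact hh j, (sInf_image).symm⟩

section FD
variable [FiniteDimensional K V]

theorem orderIso_symm_biInf {B A : Set (Submodule K V)} (hB : IsCentralArr B)
    (hA : IsCentralArr A) (ψ : ↥(lat B) ≃o ↥(lat A)) {ι : Type*}
    {h : ι → Submodule K V} (hh : ∀ j, h j ∈ A) (T : Set ι) :
    ((ψ.symm ⟨⨅ j ∈ T, h j, biInf_mem_lat hh T⟩).val) =
      ⨅ j ∈ T, (ψ.symm ⟨h j, mem_lat_self (hh j)⟩).val := by
  have hh'B : ∀ j, (ψ.symm ⟨h j, mem_lat_self (hh j)⟩).val ∈ B := fun j =>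
    orderIso_mem_arr hA hB ψ.symm (hh j)
  apply le_antisymm
  · apply le_iInf₂
    intro j hj
    have h1 : (⟨⨅ j ∈ T, h j, biInf_mem_lat hh T⟩ : ↥(lat A)) ≤
        ⟨h j, mem_lat_self (hh j)⟩ := by
      rw [← Subtype.coe_le_coe]
      exact iInf₂_le j hj
    exact Subtype.coe_le_coe.mpr (ψ.symm.monotone h1)
  · have hRB : (⨅ j ∈ T, (ψ.symm ⟨h j, mem_lat_self (hh j)⟩).val) ∈ lat B :=
      biInf_mem_lat hh'B T
    have h3 : ψ ⟨_, hRB⟩ ≤ ⟨⨅ j ∈ T, h j, biInf_mem_lat hh T⟩ := by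
      rw [← Subtype.coe_le_coe]
      apply le_iInf₂
      intro j hj
      have h2 : (⟨_, hRB⟩ : ↥(lat B)) ≤ ψ.symm ⟨h j, mem_lat_self (hh j)⟩ := by
        rw [← Subtype.coe_le_coe]
        exact iInf₂_le j hj
      have := ψ.monotone h2
      rw [ψ.apply_symm_apply] at this
      exact Subtype.coe_le_coe.mpr this
    have h4 := ψ.symm.monotone h3
    rw [ψ.symm_apply_apply] at h4
    exact Subtype.coe_le_coe.mpr h4

theorem orderIso_symm_fix_sInf {B A : Set (Submodule K V)} (hB : IsCentralArr B)
    (hA : IsCentralArr A) (ψ : ↥(lat B) ≃o ↥(lat A)) {C : Set (Submodule K V)}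
    (hC : C ⊆ A)
    (hfix : ∀ H (hH : H ∈ C), (ψ.symm ⟨H, mem_lat_self (hC hH)⟩).val = H) :
    (ψ.symm ⟨sInf C, ⟨C, hC, rfl⟩⟩).val = sInf C := by
  have hCB : C ⊆ B := fun H hH => hfix H hH ▸ orderIso_mem_arr hA hB ψ.symm (hC hH)
  apply le_antisymm
  · apply le_sInf
    intro H hH
    have h1 : (⟨sInf C, ⟨C, hC, rfl⟩⟩ : ↥(lat A)) ≤ ⟨H, mem_lat_self (hC hH)⟩ := by
      rw [← Subtype.coe_le_coe]
      exact sInf_le hH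
    have h2 := Subtype.coe_le_coe.mpr (ψ.symm.monotone h1)
    exact le_trans h2 (le_of_eq (hfix H hH))
  · have h3 : ψ ⟨sInf C, ⟨C, hCB, rfl⟩⟩ ≤ ⟨sInf C, ⟨C, hC, rfl⟩⟩ := by
      rw [← Subtype.coe_le_coe]
      apply le_sInf
      intro H hH
      have h2 : (⟨sInf C, ⟨C, hCB, rfl⟩⟩ : ↥(lat B)) ≤ ψ.symm ⟨H, mem_lat_self (hC hH)⟩ := by
        rw [← Subtype.coe_le_coe]
        exact le_of_le_of_eq (sInf_le hH) (hfix H hH).symm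
      have := ψ.monotone h2
      rw [ψ.apply_symm_apply] at this
      exact Subtype.coe_le_coe.mpr this
    have h4 := ψ.symm.monotone h3
    rw [ψ.symm_apply_apply] at h4
    exact Subtype.coe_le_coe.mpr h4

theorem gen_fix {A B' S : Set (Submodule K V)} (hA : IsCentralArr A)
    (hB' : IsCentralArr B') (hSA : S ⊆ A)
    (ψ : ↥(lat B') ≃o ↥(lat A))
    (hfixS : ∀ H (hH : H ∈ S), (ψ.symm ⟨H, mem_lat_self (hSA hH)⟩).val = H) :
    ∀ i, ∀ H (hH : H ∈ Gen A S i),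
      (ψ.symm ⟨H, mem_lat_self (Gen_subset hSA i hH)⟩).val = H := by
  intro i
  induction i with
  | zero => exact hfixS
  | succ i ih =>
    rintro H ⟨hHA, J, hJ, rfl⟩
    have hfr : finrank K ((ψ.symm ⟨sSup J, mem_lat_self hHA⟩).val) = finrank K ↥(sSup J) :=
      finrank_orderIso hA hB' ψ.symm _
    have hge : sSup J ≤ (ψ.symm ⟨sSup J, mem_lat_self hHA⟩).val := by
      apply sSup_le
      intro X hX
      obtain ⟨C, hC, rfl⟩ := hJ hX
      have hCA : C ⊆ A := fun H' hH' => Gen_subset hSA i (hC hH')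
      have hfixX : (ψ.symm ⟨sInf C, ⟨C, hCA, rfl⟩⟩).val = sInf C :=
        orderIso_symm_fix_sInf hB' hA ψ hCA (fun H' hH' => ih H' (hC hH'))
      have h1 : (⟨sInf C, ⟨C, hCA, rfl⟩⟩ : ↥(lat A)) ≤ ⟨sSup J, mem_lat_self hHA⟩ := by
        rw [← Subtype.coe_le_coe]
        exact le_sSup hX
      have h2 := Subtype.coe_le_coe.mpr (ψ.symm.monotone h1)
      exact le_of_eq_of_le hfixX.symm h2
    exact (Submodule.eq_of_le_of_finrank_le hge (le_of_eq hfr)).symm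

section FD2
variable [FiniteDimensional K V]

theorem finrank_iInf_ker_ge' {ι : Type*} [Fintype ι] (α : ι → V →ₗ[K] K) :
    finrank K V ≤ finrank K ↥(⨅ j, LinearMap.ker (α j)) + Fintype.card ι := by
  have h1 := LinearMap.finrank_range_add_finrank_ker (LinearMap.pi α)
  rw [LinearMap.ker_pi] at h1
  have h2 : finrank K ↥(LinearMap.range (LinearMap.pi α)) ≤ Fintype.card ι := by
    refine le_trans (Submodule.finrank_le _) ?_
    rw [Module.finrank_pi]
  omega

theorem finrank_iInf_ker_ge {ι : Type*} [Fintype ι] (α : ι → V →ₗ[K] K) (c : ι → K)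
    (hrel : ∑ j, c j • α j = 0) (j₀ : ι) (hj₀ : c j₀ ≠ 0) :
    finrank K V + 1 ≤ finrank K ↥(⨅ j, LinearMap.ker (α j)) + Fintype.card ι := by
  classical
  have h1 := LinearMap.finrank_range_add_finrank_ker (LinearMap.pi α)
  rw [LinearMap.ker_pi] at h1
  set g : (ι → K) →ₗ[K] K := ∑ j, c j • LinearMap.proj j with hg
  have hgne : g ≠ 0 := by
    intro h
    have : g (Pi.single j₀ 1) = c j₀ := by
      simp [hg, LinearMap.sum_apply, LinearMap.smul_apply, LinearMap.proj_apply,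
        Pi.single_apply, Finset.sum_ite_eq']
    rw [h] at this
    exact hj₀ (by simpa using this.symm)
  have hrange : LinearMap.range (LinearMap.pi α) ≤ LinearMap.ker g := by
    rintro _ ⟨v, rfl⟩
    simp only [LinearMap.mem_ker, hg, LinearMap.sum_apply, LinearMap.smul_apply,
      LinearMap.proj_apply, LinearMap.pi_apply]
    have := congrFun (congrArg (fun (f : V →ₗ[K] K) => (f : V → K)) hrel) v
    simpa [LinearMap.sum_apply, LinearMap.smul_apply, smul_eq_mul] using this
  have h2 : finrank K ↥(LinearMap.range (LinearMap.pi α)) ≤ finrank K ↥(LinearMap.ker g) :=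
    Submodule.finrank_mono hrange
  have h3 : finrank K ↥(LinearMap.ker g) + 1 = Fintype.card ι := by
    rw [ker_form_finrank hgne, Module.finrank_pi]
  omega

theorem iInf_ker_eq_bot_of_linearIndependent {ι : Type*} [Fintype ι]
    {α : ι → V →ₗ[K] K} (hind : LinearIndependent K α)
    (hcard : finrank K V ≤ Fintype.card ι) :
    ⨅ j, LinearMap.ker (α j) = ⊥ := by
  by_contra hne
  obtain ⟨v, hv, hv0⟩ := Submodule.exists_mem_ne_zero_of_ne_bot hne
  set ev : (V →ₗ[K] K) →ₗ[K] K := LinearMap.applyₗ v with hev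
  have hevne : ev ≠ 0 := by
    intro h
    apply hv0
    rw [← Module.forall_dual_apply_eq_zero_iff K v]
    intro φ
    exact congrFun (congrArg (fun (f : (V →ₗ[K] K) →ₗ[K] K) => (f : (V →ₗ[K] K) → K)) h) φ
  have hmem : ∀ j, α j ∈ LinearMap.ker ev := by
    intro j
    have : v ∈ LinearMap.ker (α j) := (Submodule.mem_iInf _).mp hv j
    simpa [hev, LinearMap.mem_ker] using this
  have hind' : LinearIndependent K (fun j => (⟨α j, hmem j⟩ : ↥(LinearMap.ker ev))) :=
    hind.of_comp (LinearMap.ker ev).subtype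
  have hcard' := hind'.fintype_card_le_finrank
  have hkerfr : finrank K ↥(LinearMap.ker ev) + 1 = finrank K (V →ₗ[K] K) :=
    ker_form_finrank hevne
  have hdual : finrank K (V →ₗ[K] K) = finrank K V := Subspace.dual_finrank_eq
  omega

end FD2

section FD3
variable [FiniteDimensional K V]

theorem bot_not_mem_arr {A : Set (Submodule K V)} (hA : IsCentralArr A)
    (hfr2 : 2 ≤ finrank K V) : (⊥ : Submodule K V) ∉ A := by
  intro hb
  have := coatom_finrank (hA.2 ⊥ hb)
  rw [finrank_bot] at this
  omega

theorem sInf_S_eq_bot {A S : Set (Submodule K V)} (hA : IsCentralArr A)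
    (hess : sInf A = ⊥) (hSA : S ⊆ A) (hgen : genSpan A S = A)
    (hfr2 : 2 ≤ finrank K V) : sInf S = ⊥ := by
  have hbot := bot_not_mem_arr hA hfr2
  rw [← le_bot_iff, ← hess]
  apply le_sInf
  intro H hH
  rw [← hgen] at hH
  obtain ⟨_, ⟨i, rfl⟩, hHi⟩ := hH
  exact sInf_le_of_mem_Gen hbot i H hHi

theorem full_support {A S : Set (Submodule K V)} (hA : IsCentralArr A)
    (hess : sInf A = ⊥) (hirr : IsIrredArr A) (hSA : S ⊆ A)
    (hgen : genSpan A S = A) (hfr2 : 2 ≤ finrank K V)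
    {m : ℕ} (hm : m = finrank K V + 1) {h : Fin m → Submodule K V}
    (hrange : Set.range h = S)
    {α : Fin m → V →ₗ[K] K} (hker : ∀ j, LinearMap.ker (α j) = h j)
    {c : Fin m → K} (hrel : ∑ j, c j • α j = 0) (hcne : ∃ j, c j ≠ 0) :
    ∀ j, c j ≠ 0 := by
  classical
  by_contra hcon
  push_neg at hcon
  obtain ⟨i₀, hi₀⟩ := hcon
  obtain ⟨j₁, hj₁⟩ := hcne
  have hhS : ∀ j, h j ∈ S := fun j => hrange ▸ Set.mem_range_self j
  have hSbot : sInf S = ⊥ := sInf_S_eq_bot hA hess hSA hgen hfr2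
  set T : Finset (Fin m) := Finset.univ.filter (fun j => c j ≠ 0) with hT
  have hmemT : ∀ j, j ∈ T ↔ c j ≠ 0 := by intro j; simp [hT]
  have hj₁T : j₁ ∈ T := (hmemT j₁).mpr hj₁
  have hi₀T : i₀ ∉ T := fun hh => (hmemT i₀).mp hh hi₀
  -- |T| ≥ 2
  have hT2 : 2 ≤ T.card := by
    have : ∃ j₂ ∈ T, j₂ ≠ j₁ := by
      by_contra hcon2
      push_neg at hcon2
      have hsum : ∑ j, c j • α j = c j₁ • α j₁ := by
        apply Finset.sum_eq_single
        · intro j _ hjne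
          have : c j = 0 := by
            by_contra hc
            exact hjne (hcon2 j ((hmemT j).mpr hc))
          simp [this]
        · intro hj; exact absurd (Finset.mem_univ j₁) hj
      rw [hrel] at hsum
      have : α j₁ = 0 := by
        rcases smul_eq_zero.mp hsum.symm with h0 | h0
        · exact absurd h0 hj₁
        · exact h0
      have htop : h j₁ = ⊤ := by rw [← hker j₁, this, LinearMap.ker_zero]
      exact (hA.2 _ (hSA (hhS j₁))).1 htop
    obtain ⟨j₂, hj₂T, hj₂ne⟩ := this
    exact Finset.one_lt_card.mpr ⟨j₁, hj₁T, j₂, hj₂T, fun hh => hj₂ne hh.symm⟩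
  -- U and W
  set U : Submodule K V := ⨅ j ∈ T, h j with hU
  set W : Submodule K V := ⨅ j ∈ Tᶜ, h j with hW
  -- finrank bound for U
  have hUfr : finrank K V + 1 ≤ finrank K ↥U + T.card := by
    have hrelT : ∑ j : {j // j ∈ T}, c j.val • α j.val = 0 := by
      rw [Finset.sum_coe_sort T (fun j => c j • α j)]
      rw [← hrel]
      apply Finset.sum_subset (Finset.subset_univ T)
      intro j _ hjT
      have : c j = 0 := by
        by_contra hc
        exact hjT ((hmemT j).mpr hc)
      simp [this]
    have := finrank_iInf_ker_ge (fun j : {j // j ∈ T} => α j.val)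
      (fun j => c j.val) hrelT ⟨j₁, hj₁T⟩ hj₁
    have hiinf : (⨅ j : {j // j ∈ T}, LinearMap.ker (α j.val)) = U := by
      rw [hU, iInf_subtype]
      exact iInf_congr fun j => iInf_congr fun hj => hker j
    rw [hiinf, Fintype.card_coe] at this
    exact this
  -- finrank bound for W
  have hWfr : finrank K V ≤ finrank K ↥W + Tᶜ.card := by
    have := finrank_iInf_ker_ge' (fun j : {j // j ∈ Tᶜ} => α j.val)
    have hiinf : (⨅ j : {j // j ∈ Tᶜ}, LinearMap.ker (α j.val)) = W := by
      rw [hW, iInf_subtype]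
      exact iInf_congr fun j => iInf_congr fun hj => hker j
    rw [hiinf, Fintype.card_coe] at this
    exact this
  have hcards : T.card + Tᶜ.card = m := by
    rw [Finset.card_add_card_compl, Fintype.card_fin]
  have hTle : T.card + 1 ≤ m := by
    have : Tᶜ.card ≥ 1 := Finset.card_pos.mpr ⟨i₀, Finset.mem_compl.mpr hi₀T⟩
    omega
  -- disjointness
  have hinf : U ⊓ W = ⊥ := by
    rw [← hSbot]
    apply le_antisymm
    · apply le_sInf
      intro H hH
      rw [← hrange] at hH
      obtain ⟨j, rfl⟩ := hH
      by_cases hjT : j ∈ T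
      · exact le_trans inf_le_left (iInf₂_le j hjT)
      · exact le_trans inf_le_right (iInf₂_le j (Finset.mem_compl.mpr hjT))
    · rw [hSbot]; exact bot_le
  -- complement
  have hfrinf : finrank K ↥(U ⊓ W) = 0 := by rw [hinf, finrank_bot]
  have hsupfr := Submodule.finrank_sup_add_finrank_inf_eq U W
  have hsuple : finrank K ↥(U ⊔ W) ≤ finrank K V := Submodule.finrank_le _
  have hsup : U ⊔ W = ⊤ := by
    apply Submodule.eq_top_of_finrank_eq
    omega
  have hUW : IsCompl U W := ⟨disjoint_iff.mpr hinf, codisjoint_iff.mpr hsup⟩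
  have hUne : U ≠ ⊥ := by
    intro hb
    rw [hb, finrank_bot] at hUfr
    omega
  have hWne : W ≠ ⊥ := by
    intro hb
    rw [hb, finrank_bot] at hWfr
    omega
  have hSdec : ∀ H ∈ S, U ≤ H ∨ W ≤ H := by
    intro H hH
    rw [← hrange] at hH
    obtain ⟨j, rfl⟩ := hH
    by_cases hjT : j ∈ T
    · exact Or.inl (iInf₂_le j hjT)
    · exact Or.inr (iInf₂_le j (Finset.mem_compl.mpr hjT))
  apply hirr
  refine ⟨U, W, hUW, hUne, hWne, ?_⟩
  intro H hH
  rw [← hgen] at hH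
  obtain ⟨_, ⟨i, rfl⟩, hHi⟩ := hH
  exact gen_dec hA.2 hUW hSdec i H hHi

end FD3

section FD4
variable [FiniteDimensional K V]

theorem general_position {A S : Set (Submodule K V)} (hA : IsCentralArr A)
    (hess : sInf A = ⊥) (hirr : IsIrredArr A) (hSA : S ⊆ A)
    (hgen : genSpan A S = A) (hfr2 : 2 ≤ finrank K V)
    {m : ℕ} (hm : m = finrank K V + 1) {h : Fin m → Submodule K V}
    (hrange : Set.range h = S) (i₀ : Fin m) :
    (⨅ j ∈ {j | j ≠ i₀}, h j) = ⊥ := by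
  classical
  have hhS : ∀ j, h j ∈ S := fun j => hrange ▸ Set.mem_range_self j
  have hco : ∀ j, IsCoatom (h j) := fun j => hA.2 _ (hSA (hhS j))
  choose α hker using fun j => exists_form_of_coatom (hco j)
  have hcard : Fintype.card {j : Fin m // j ≠ i₀} = finrank K V := by
    have h1 : Fintype.card {j : Fin m // j ≠ i₀} = m - 1 := by
      rw [Fintype.card_subtype_compl, Fintype.card_subtype_eq, Fintype.card_fin]
    omega
  have hind : LinearIndependent K (fun j : {j : Fin m // j ≠ i₀} => α j.val) := by
    by_contra hnind
    obtain ⟨c', hsum, j₂, hj₂⟩ := Fintype.not_linearIndependent_iff.mp hnind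
    set c : Fin m → K := fun j => if hj : j = i₀ then 0 else c' ⟨j, hj⟩ with hc
    have hrel : ∑ j, c j • α j = 0 := by
      have e1 : ∑ j, c j • α j = ∑ j ∈ ({i₀}ᶜ : Finset (Fin m)), c j • α j := by
        refine (Finset.sum_subset (Finset.subset_univ _) ?_).symm
        intro j _ hj
        have : j = i₀ := by simpa using hj
        simp [hc, this]
      have e2 : ∑ j ∈ ({i₀}ᶜ : Finset (Fin m)), c j • α j
          = ∑ j : {j : Fin m // j ≠ i₀}, c j.val • α j.val := by
        refine Finset.sum_subtype _ (fun j => ?_) _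
        simp
      rw [e1, e2]
      rw [← hsum]
      apply Finset.sum_congr rfl
      intro j _
      congr 1
      simp [hc, j.prop]
    have hcne : ∃ j, c j ≠ 0 := ⟨j₂.val, by simpa [hc, j₂.prop] using hj₂⟩
    have := full_support hA hess hirr hSA hgen hfr2 hm hrange hker hrel hcne i₀
    exact this (by simp [hc])
  have hbot := iInf_ker_eq_bot_of_linearIndependent hind (le_of_eq hcard.symm)
  rw [← hbot, iInf_subtype]
  exact iInf_congr fun j => iInf_congr fun hj => (hker j).symm

end FD4

section Std
/-- The standard configuration of `ℓ+1` hyperplanes in general position. -/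
noncomputable def stdHyp (ℓ : ℕ) (K : Type*) [Field K] : Fin (ℓ+1) → Submodule K (Fin ℓ → K) :=
  fun i => Fin.lastCases (LinearMap.ker (∑ j, LinearMap.proj j))
    (fun j => LinearMap.ker (LinearMap.proj j)) i

variable {K : Type*} [Field K] {ℓ : ℕ}

theorem normalize_config {h : Fin (ℓ+1) → Submodule K (Fin ℓ → K)}
    (hco : ∀ j, IsCoatom (h j))
    (hgp : ∀ i₀, (⨅ j ∈ {j | j ≠ i₀}, h j) = ⊥) :
    ∃ φ : (Fin ℓ → K) ≃ₗ[K] (Fin ℓ → K),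
      ∀ i, Submodule.map (φ : (Fin ℓ → K) →ₗ[K] (Fin ℓ → K)) (h i) = stdHyp ℓ K i := by
  classical
  choose α hker using fun j => exists_form_of_coatom (hco j)
  set Φ : (Fin ℓ → K) →ₗ[K] (Fin ℓ → K) :=
    LinearMap.pi (fun j : Fin ℓ => α j.castSucc) with hΦ
  have hkerΦ : LinearMap.ker Φ = ⊥ := by
    rw [hΦ, LinearMap.ker_pi]
    rw [← hgp (Fin.last ℓ)]
    apply le_antisymm
    · apply le_iInf₂
      intro i hi
      induction i using Fin.lastCases with
      | last => exact absurd rfl hi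
      | cast j => exact le_trans (iInf_le _ j) (le_of_eq (hker j.castSucc))
    · apply le_iInf
      intro j
      rw [hker j.castSucc]
      exact iInf₂_le (Fin.castSucc j) (show Fin.castSucc j ≠ Fin.last ℓ from Fin.ne_of_lt (Fin.castSucc_lt_last j))
  have hinj : Function.Injective Φ := LinearMap.ker_eq_bot.mp hkerΦ
  have hsurj : Function.Surjective Φ := (LinearMap.injective_iff_surjective).mp hinj
  set φ₁ : (Fin ℓ → K) ≃ₗ[K] (Fin ℓ → K) := LinearEquiv.ofBijective Φ ⟨hinj, hsurj⟩ with hφ₁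
  have hφ₁app : ∀ x, Φ (φ₁.symm x) = x := by
    intro x
    have : φ₁ (φ₁.symm x) = x := φ₁.apply_symm_apply x
    exact this
  have hmap1 : ∀ j : Fin ℓ, Submodule.map (φ₁ : (Fin ℓ → K) →ₗ[K] (Fin ℓ → K)) (h j.castSucc)
      = LinearMap.ker (LinearMap.proj j) := by
    intro j
    ext x
    rw [Submodule.mem_map_equiv, ← hker j.castSucc, LinearMap.mem_ker, LinearMap.mem_ker]
    constructor
    · intro hx
      have : Φ (φ₁.symm x) j = 0 := by
        rw [hΦ]; simpa [LinearMap.pi_apply] using hx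
      rwa [hφ₁app] at this
    · intro hx
      have : Φ (φ₁.symm x) j = 0 := by rw [hφ₁app]; exact hx
      rw [hΦ] at this; simpa [LinearMap.pi_apply] using this
  set β : (Fin ℓ → K) →ₗ[K] K :=
    (α (Fin.last ℓ)).comp (φ₁.symm : (Fin ℓ → K) →ₗ[K] (Fin ℓ → K)) with hβ
  have hmapl : Submodule.map (φ₁ : (Fin ℓ → K) →ₗ[K] (Fin ℓ → K)) (h (Fin.last ℓ))
      = LinearMap.ker β := by
    ext x
    rw [Submodule.mem_map_equiv, ← hker (Fin.last ℓ), LinearMap.mem_ker, LinearMap.mem_ker, hβ]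
    rfl
  set cc : Fin ℓ → K := fun j => β (fun j' => if j = j' then 1 else 0) with hcc
  have hccne : ∀ j, cc j ≠ 0 := by
    intro j hc0
    have hmem : φ₁.symm (fun j' => if j = j' then 1 else 0) ∈
        ⨅ i ∈ {i | i ≠ j.castSucc}, h i := by
      apply Submodule.mem_iInf _ |>.mpr
      intro i
      apply Submodule.mem_iInf _ |>.mpr
      intro hi
      induction i using Fin.lastCases with
      | last =>
        have hv : β (fun j' => if j = j' then 1 else 0) = 0 := hc0
        have : α (Fin.last ℓ) (φ₁.symm (fun j' => if j = j' then 1 else 0)) = 0 := hv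
        have hmm := LinearMap.mem_ker.mpr this
        rwa [hker (Fin.last ℓ)] at hmm
      | cast j' =>
        have hj' : j' ≠ j := by
          intro hh; exact hi (by rw [hh])
        have : (fun j'' => if j = j'' then 1 else (0:K)) ∈
            LinearMap.ker (LinearMap.proj j' : (Fin ℓ → K) →ₗ[K] K) := by
          simp only [LinearMap.mem_ker, LinearMap.proj_apply]
          exact if_neg (fun hh => hj' hh.symm)
        rw [← hmap1 j', Submodule.mem_map_equiv] at this
        exact this
    rw [hgp j.castSucc] at hmem
    have := congrFun (congrArg (fun (v : Fin ℓ → K) => φ₁ v) (Submodule.mem_bot K |>.mp hmem)) j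
    simp only [map_zero] at this
    rw [LinearEquiv.apply_symm_apply] at this
    simp at this
  have hβsum : ∀ x : Fin ℓ → K, β x = ∑ j, x j * cc j := by
    intro x
    rw [LinearMap.pi_apply_eq_sum_univ β x]
    exact Finset.sum_congr rfl (fun j _ => by rw [smul_eq_mul, hcc])
  -- the diagonal correction
  set f : (Fin ℓ → K) →ₗ[K] (Fin ℓ → K) :=
    LinearMap.pi (fun j => cc j • LinearMap.proj j) with hf
  set g : (Fin ℓ → K) →ₗ[K] (Fin ℓ → K) :=
    LinearMap.pi (fun j => (cc j)⁻¹ • LinearMap.proj j) with hg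
  have hfg : f.comp g = LinearMap.id := by
    apply LinearMap.ext; intro x; funext j
    simp [hf, hg, LinearMap.pi_apply, mul_inv_cancel_left₀ (hccne j)]
  have hgf : g.comp f = LinearMap.id := by
    apply LinearMap.ext; intro x; funext j
    simp [hf, hg, LinearMap.pi_apply, inv_mul_cancel_left₀ (hccne j)]
  set φ₂ : (Fin ℓ → K) ≃ₗ[K] (Fin ℓ → K) := LinearEquiv.ofLinear f g hfg hgf with hφ₂
  have hφ₂symm : ∀ x, φ₂.symm x = g x := fun x => rfl
  refine ⟨φ₁.trans φ₂, ?_⟩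
  intro i
  have hcomp : Submodule.map ((φ₁.trans φ₂ : (Fin ℓ → K) ≃ₗ[K] (Fin ℓ → K)) :
      (Fin ℓ → K) →ₗ[K] (Fin ℓ → K)) (h i)
      = Submodule.map (φ₂ : (Fin ℓ → K) →ₗ[K] (Fin ℓ → K))
        (Submodule.map (φ₁ : (Fin ℓ → K) →ₗ[K] (Fin ℓ → K)) (h i)) := by
    rw [← Submodule.map_comp]
    rfl
  rw [hcomp]
  induction i using Fin.lastCases with
  | last =>
    rw [hmapl]
    ext x
    rw [Submodule.mem_map_equiv, LinearMap.mem_ker]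
    have : β (φ₂.symm x) = ∑ j, x j := by
      rw [hφ₂symm, hβsum]
      apply Finset.sum_congr rfl
      intro j _
      simp only [hg, LinearMap.pi_apply, LinearMap.smul_apply, LinearMap.proj_apply, smul_eq_mul]
      rw [mul_comm ((cc j)⁻¹) (x j), mul_assoc, inv_mul_cancel₀ (hccne j), mul_one]
    rw [this, stdHyp, Fin.lastCases_last, LinearMap.mem_ker]
    simp [LinearMap.sum_apply, LinearMap.proj_apply]
  | cast j =>
    rw [hmap1 j]
    ext x
    rw [Submodule.mem_map_equiv, LinearMap.mem_ker]
    rw [stdHyp, Fin.lastCases_castSucc, LinearMap.mem_ker]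
    have : (φ₂.symm x) j = (cc j)⁻¹ * x j := by
      rw [hφ₂symm]; simp [hg, LinearMap.pi_apply, smul_eq_mul]
    rw [LinearMap.proj_apply, LinearMap.proj_apply, this]
    constructor
    · intro hh
      have := congrArg (fun t => cc j * t) hh
      simpa [mul_inv_cancel_left₀ (hccne j)] using this
    · intro hh; rw [hh, mul_zero]

end Std

theorem map_sInf_equiv (φ : V ≃ₗ[K] V) (C : Set (Submodule K V)) :
    Submodule.map (φ : V →ₗ[K] V) (sInf C) = sInf ((Submodule.map (φ : V →ₗ[K] V)) '' C) := by
  apply le_antisymm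
  · apply le_sInf
    rintro _ ⟨H, hH, rfl⟩
    exact Submodule.map_mono (sInf_le hH)
  · intro x hx
    have hx' : ∀ H ∈ C, φ.symm x ∈ H := by
      intro H hH
      have : x ∈ Submodule.map (φ : V →ₗ[K] V) H :=
        Submodule.mem_sInf.mp hx _ ⟨H, hH, rfl⟩
      rwa [Submodule.mem_map_equiv] at this
    have : φ.symm x ∈ sInf C := Submodule.mem_sInf.mpr hx'
    refine ⟨φ.symm x, this, by simp⟩

theorem map_map_symm (φ : V ≃ₗ[K] V) (p : Submodule K V) :
    Submodule.map (φ.symm : V →ₗ[K] V) (Submodule.map (φ : V →ₗ[K] V) p) = p := by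
  ext x
  rw [Submodule.mem_map_equiv, LinearEquiv.symm_symm, Submodule.mem_map_equiv]
  simp

theorem mem_lat_image (φ : V ≃ₗ[K] V) {B : Set (Submodule K V)} {X : Submodule K V}
    (hX : X ∈ lat B) :
    Submodule.map (φ : V →ₗ[K] V) X ∈ lat ((Submodule.map (φ : V →ₗ[K] V)) '' B) := by
  obtain ⟨C, hC, rfl⟩ := hX
  exact ⟨(Submodule.map (φ : V →ₗ[K] V)) '' C, Set.image_mono hC, map_sInf_equiv φ C⟩

theorem image_symm_image (φ : V ≃ₗ[K] V) (B : Set (Submodule K V)) :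
    (Submodule.map (φ.symm : V →ₗ[K] V)) '' ((Submodule.map (φ : V →ₗ[K] V)) '' B) = B := by
  ext H
  constructor
  · rintro ⟨_, ⟨H', hH', rfl⟩, rfl⟩
    rwa [map_map_symm]
  · intro hH
    exact ⟨_, ⟨H, hH, rfl⟩, map_map_symm φ H⟩

/-- The order isomorphism between `lat B` and `lat (φ '' B)`. -/
noncomputable def latMapIso (φ : V ≃ₗ[K] V) (B : Set (Submodule K V)) :
    ↥(lat B) ≃o ↥(lat ((Submodule.map (φ : V →ₗ[K] V)) '' B)) where
  toFun := fun X => ⟨Submodule.map (φ : V →ₗ[K] V) X.1, mem_lat_image φ X.2⟩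
  invFun := fun Y => ⟨Submodule.map (φ.symm : V →ₗ[K] V) Y.1, by
    have h1 := mem_lat_image φ.symm Y.2
    rwa [image_symm_image] at h1⟩
  left_inv := fun X => Subtype.ext (map_map_symm φ X.1)
  right_inv := fun Y => Subtype.ext (by
    have := map_map_symm φ.symm Y.1
    rwa [LinearEquiv.symm_symm] at this)
  map_rel_iff' := by
    intro X Y
    constructor
    · intro hh
      have hh' : Submodule.map (φ : V →ₗ[K] V) X.1 ≤ Submodule.map (φ : V →ₗ[K] V) Y.1 := hh
      have h2 := Submodule.map_mono (f := (φ.symm : V →ₗ[K] V)) hh'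
      rw [map_map_symm, map_map_symm] at h2
      exact Subtype.coe_le_coe.mp h2
    · intro hh
      have hh' : X.1 ≤ Y.1 := Subtype.coe_le_coe.mpr hh
      exact Subtype.mk_le_mk.mpr (Submodule.map_mono hh')

section FD
variable [FiniteDimensional K V]

theorem isCoatom_of_finrank {H : Submodule K V} (hfr : finrank K H + 1 = finrank K V) :
    IsCoatom H := by
  constructor
  · intro htop
    rw [htop, finrank_top] at hfr
    omega
  · intro b hb
    apply Submodule.eq_top_of_finrank_eq
    have h1 := Submodule.finrank_lt_finrank_of_lt hb
    have h2 : finrank K b ≤ finrank K V := Submodule.finrank_le _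
    omega

theorem isCoatom_map_equiv (φ : V ≃ₗ[K] V) {H : Submodule K V} (hH : IsCoatom H) :
    IsCoatom (Submodule.map (φ : V →ₗ[K] V) H) := by
  apply isCoatom_of_finrank
  rw [LinearEquiv.finrank_map_eq]
  exact coatom_finrank hH

theorem central_image (φ : V ≃ₗ[K] V) {B : Set (Submodule K V)} (hB : IsCentralArr B) :
    IsCentralArr ((Submodule.map (φ : V →ₗ[K] V)) '' B) := by
  refine ⟨hB.1.image _, ?_⟩
  rintro _ ⟨H, hH, rfl⟩
  exact isCoatom_map_equiv φ (hB.2 H hH)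

end FD


/-- An essential irreducible central arrangement in `K^ℓ`
generated by a subset of `ℓ + 1` hyperplanes is projectively unique. -/
theorem projUnique_of_gen (K : Type) [Field K] (ℓ : ℕ)
    (A : Set (Submodule K (Fin ℓ → K)))
    (hA : IsCentralArr A) (hess : sInf A = ⊥) (hirr : IsIrredArr A)
    (S : Set (Submodule K (Fin ℓ → K))) (hSA : S ⊆ A)
    (hgen : genSpan A S = A) (hcard : S.ncard = ℓ + 1) :
    ProjUnique A := by
  classical
  have hfrV : finrank K (Fin ℓ → K) = ℓ := by
    rw [Module.finrank_pi, Fintype.card_fin]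
  have hSfin : S.Finite := hA.1.subset hSA
  by_cases hl2 : 2 ≤ ℓ
  swap
  · exfalso
    interval_cases ℓ
    · have hS0 : S = ∅ := by
        rw [Set.eq_empty_iff_forall_notMem]
        intro H hH
        have := coatom_finrank (hA.2 H (hSA hH))
        rw [hfrV] at this
        omega
      rw [hS0] at hcard
      simp at hcard
    · have hsub : S ⊆ {⊥} := by
        intro H hH
        have h1 := coatom_finrank (hA.2 H (hSA hH))
        rw [hfrV] at h1
        have h0 : finrank K ↥H = 0 := by omega
        have := Submodule.finrank_eq_zero.mp h0
        simpa using this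
      have := Set.ncard_le_ncard hsub (Set.finite_singleton _)
      rw [hcard, Set.ncard_singleton] at this
      omega
  have hfr2 : 2 ≤ finrank K (Fin ℓ → K) := by rw [hfrV]; exact hl2
  -- enumerate S
  have hScard : hSfin.toFinset.card = ℓ + 1 := by
    rw [← Set.ncard_eq_toFinset_card S hSfin, hcard]
  set e := hSfin.toFinset.equivFinOfCardEq hScard with hedef
  set h : Fin (ℓ+1) → Submodule K (Fin ℓ → K) := fun j => (e.symm j).val with hhdef
  have hhS : ∀ j, h j ∈ S := by
    intro j
    have := (e.symm j).2
    rwa [Set.Finite.mem_toFinset] at this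
  have hrange : Set.range h = S := by
    apply Set.eq_of_subset_of_subset
    · rintro _ ⟨j, rfl⟩; exact hhS j
    · intro H hH
      refine ⟨e ⟨H, hSfin.mem_toFinset.mpr hH⟩, ?_⟩
      rw [hhdef]
      simp
  have hgp : ∀ i₀, (⨅ j ∈ {j | j ≠ i₀}, h j) = ⊥ := fun i₀ =>
    general_position hA hess hirr hSA hgen hfr2 (by rw [hfrV]) hrange i₀
  have hcoS : ∀ j, IsCoatom (h j) := fun j => hA.2 _ (hSA (hhS j))
  obtain ⟨φA, hφA⟩ := normalize_config hcoS hgp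
  -- now take B L-equivalent to A
  intro B hB hLE
  obtain ⟨ψ⟩ := hLE
  have hh'B : ∀ j, (ψ.symm ⟨h j, mem_lat_self (hSA (hhS j))⟩).val ∈ B := fun j =>
    orderIso_mem_arr hA hB ψ.symm (hSA (hhS j))
  set h' : Fin (ℓ+1) → Submodule K (Fin ℓ → K) :=
    fun j => (ψ.symm ⟨h j, mem_lat_self (hSA (hhS j))⟩).val with hh'def
  have hco' : ∀ j, IsCoatom (h' j) := fun j => hB.2 _ (hh'B j)
  have hgp' : ∀ i₀, (⨅ j ∈ {j | j ≠ i₀}, h' j) = ⊥ := by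
    intro i₀
    have hbi := orderIso_symm_biInf hB hA ψ (fun j => hSA (hhS j)) {j | j ≠ i₀}
    simp only [hh'def]
    rw [← hbi]
    apply Submodule.finrank_eq_zero.mp
    rw [finrank_orderIso hA hB ψ.symm
      ⟨_, biInf_mem_lat (fun j => hSA (hhS j)) {j | j ≠ i₀}⟩]
    show finrank K ↥(⨅ j ∈ {j | j ≠ i₀}, h j) = 0
    rw [hgp i₀]
    exact finrank_bot K (Fin ℓ → K)
  obtain ⟨φB, hφB⟩ := normalize_config hco' hgp'
  set φ : (Fin ℓ → K) ≃ₗ[K] (Fin ℓ → K) := φB.trans φA.symm with hφdef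
  have hmapφ : ∀ j, Submodule.map (φ : (Fin ℓ → K) →ₗ[K] (Fin ℓ → K)) (h' j) = h j := by
    intro j
    have h1 : Submodule.map (φ : (Fin ℓ → K) →ₗ[K] (Fin ℓ → K)) (h' j)
        = Submodule.map (φA.symm : (Fin ℓ → K) →ₗ[K] (Fin ℓ → K))
          (Submodule.map (φB : (Fin ℓ → K) →ₗ[K] (Fin ℓ → K)) (h' j)) := by
      rw [← Submodule.map_comp]
      rfl
    rw [h1, hφB j, ← hφA j, map_map_symm]
  set B' := (Submodule.map (φ : (Fin ℓ → K) →ₗ[K] (Fin ℓ → K))) '' B with hB'def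
  have hB' : IsCentralArr B' := central_image φ hB
  set ψ' : ↥(lat B') ≃o ↥(lat A) := (latMapIso φ B).symm.trans ψ with hψ'def
  have hψ'symm : ∀ x, ψ'.symm x = latMapIso φ B (ψ.symm x) := fun x => rfl
  have hfixS : ∀ H (hH : H ∈ S), (ψ'.symm ⟨H, mem_lat_self (hSA hH)⟩).val = H := by
    intro H hH
    have hH2 := hH
    rw [← hrange] at hH2
    obtain ⟨j, hj⟩ := hH2
    subst hj
    rw [hψ'symm]
    show Submodule.map (φ : (Fin ℓ → K) →ₗ[K] (Fin ℓ → K))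
      ((ψ.symm ⟨h j, mem_lat_self (hSA hH)⟩).val) = h j
    exact hmapφ j
  have hfix := gen_fix hA hB' hSA ψ' hfixS
  have hAB' : A = B' := by
    apply Set.eq_of_subset_of_subset
    · intro H hH
      have hHgen : H ∈ genSpan A S := by rw [hgen]; exact hH
      obtain ⟨_, ⟨i, rfl⟩, hHi⟩ := hHgen
      have h1 := hfix i H hHi
      have h2 : (ψ'.symm ⟨H, mem_lat_self (Gen_subset hSA i hHi)⟩).val ∈ B' :=
        orderIso_mem_arr hA hB' ψ'.symm (Gen_subset hSA i hHi)
      rwa [h1] at h2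
    · intro H' hH'
      set X := (ψ' ⟨H', mem_lat_self hH'⟩).val with hXdef
      have hXA : X ∈ A := orderIso_mem_arr hB' hA ψ' hH'
      have hXgen : X ∈ genSpan A S := by rw [hgen]; exact hXA
      obtain ⟨_, ⟨i, rfl⟩, hXi⟩ := hXgen
      have h1 := hfix i X hXi
      have h2 : ψ'.symm ⟨X, mem_lat_self (Gen_subset hSA i hXi)⟩ = ⟨H', mem_lat_self hH'⟩ := by
        have h3 : (⟨X, mem_lat_self (Gen_subset hSA i hXi)⟩ : ↥(lat A))
            = ψ' ⟨H', mem_lat_self hH'⟩ := Subtype.ext rfl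
        rw [h3, ψ'.symm_apply_apply]
      rw [h2] at h1
      have : H' = X := h1
      rw [this]
      exact hXA
  exact ⟨φ, hAB'⟩
end FD
end
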